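/- Let p ≥ 5 be a prime and b_p(3) = (3^(p-1) - 1)/p the Fermat quotient of 3. Then b_p(3)/2 - p * b_p(3)^2 / 4 ≡ sum_{r=1}^{floor(p/3)} 1/(p - 3r) mod p^2, as a congruence of p-integral rationals. -/

import Mathlib

namespace LehmerAux
/-- `x` is a p-adic unit rational. -/
def U (p : ℕ) (x : ℚ) : Prop := ∃ c d : ℤ, ¬ (p:ℤ) ∣ c ∧ ¬ (p:ℤ) ∣ d ∧ x * d = c

/-- divisibility by p^k of a rational -/
def D (p k : ℕ) (x : ℚ) : Prop := ∃ a b : ℤ, ¬ (p:ℤ) ∣ b ∧ x * b = (p:ℚ)^k * a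

variable {p : ℕ} {x y : ℚ} (hp : p.Prime)

theorem not_dvd_one (hp : p.Prime) : ¬ (p:ℤ) ∣ 1 := by
  intro h
  have := Int.le_of_dvd one_pos h
  have := hp.two_le
  omega

theorem pp (hp : p.Prime) : Prime (p:ℤ) := Nat.prime_iff_prime_int.mp hp

theorem U_int (hp : p.Prime) {n : ℤ} (hn : ¬ (p:ℤ) ∣ n) : U p (n:ℚ) :=
  ⟨n, 1, hn, not_dvd_one hp, by simp⟩

theorem U_ne_zero (h : U p x) : x ≠ 0 := by
  obtain ⟨c, d, hc, hd, he⟩ := h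
  rintro rfl
  rw [zero_mul] at he
  have : c = 0 := by exact_mod_cast he.symm
  exact hc (this ▸ dvd_zero (p:ℤ))

theorem U_inv (h : U p x) : U p x⁻¹ := by
  obtain ⟨c, d, hc, hd, he⟩ := h
  have hx : x ≠ 0 := U_ne_zero ⟨c, d, hc, hd, he⟩
  refine ⟨d, c, hd, hc, ?_⟩
  field_simp at he ⊢
  rw [← he]

theorem U_mul (hp : p.Prime) (h : U p x) (h' : U p y) : U p (x * y) := by
  obtain ⟨c, d, hc, hd, he⟩ := h
  obtain ⟨c', d', hc', hd', he'⟩ := h'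
  refine ⟨c * c', d * d', ?_, ?_, ?_⟩
  · exact fun h => ((pp hp).dvd_mul.mp h).elim hc hc'
  · exact fun h => ((pp hp).dvd_mul.mp h).elim hd hd'
  · push_cast; rw [← he, ← he']; ring

theorem U_toD (h : U p x) : D p 0 x := by
  obtain ⟨c, d, hc, hd, he⟩ := h
  exact ⟨c, d, hd, by simpa using he⟩

theorem D_int (hp : p.Prime) (n : ℤ) : D p 0 (n:ℚ) := ⟨n, 1, not_dvd_one hp, by simp⟩

theorem D_nat (hp : p.Prime) (n : ℕ) : D p 0 (n:ℚ) := by exact_mod_cast D_int hp (n:ℤ)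

theorem D_zero (hp : p.Prime) (k : ℕ) : D p k 0 := ⟨0, 1, not_dvd_one hp, by simp⟩

theorem D_add {k : ℕ} (hp : p.Prime) (h : D p k x) (h' : D p k y) : D p k (x + y) := by
  obtain ⟨a, c, hc, he⟩ := h
  obtain ⟨a', c', hc', he'⟩ := h'
  refine ⟨a * c' + a' * c, c * c', fun h => ((pp hp).dvd_mul.mp h).elim hc hc', ?_⟩
  push_cast
  calc (x + y) * (c * c') = (x * c) * c' + (y * c') * c := by ring
  _ = (p:ℚ)^k * (a * c' + a' * c) := by rw [he, he']; ring

theorem D_neg {k : ℕ} (h : D p k x) : D p k (-x) := by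
  obtain ⟨a, c, hc, he⟩ := h
  exact ⟨-a, c, hc, by push_cast; rw [neg_mul, he]; ring⟩

theorem D_sub {k : ℕ} (hp : p.Prime) (h : D p k x) (h' : D p k y) : D p k (x - y) := by
  simpa [sub_eq_add_neg] using D_add hp h (D_neg h')

theorem D_mul {j k : ℕ} (hp : p.Prime) (h : D p j x) (h' : D p k y) : D p (j + k) (x * y) := by
  obtain ⟨a, c, hc, he⟩ := h
  obtain ⟨a', c', hc', he'⟩ := h'
  refine ⟨a * a', c * c', fun h => ((pp hp).dvd_mul.mp h).elim hc hc', ?_⟩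
  push_cast
  calc (x * y) * (c * c') = (x * c) * (y * c') := by ring
  _ = (p:ℚ)^(j+k) * (a * a') := by rw [he, he']; ring

theorem D_mul0 {k : ℕ} (hp : p.Prime) (h : D p k x) (h' : D p 0 y) : D p k (x * y) := by
  simpa using D_mul hp h h'

theorem D_mono {j k : ℕ} (hjk : j ≤ k) (h : D p k x) : D p j x := by
  obtain ⟨a, c, hc, he⟩ := h
  refine ⟨(p:ℤ)^(k - j) * a, c, hc, ?_⟩
  push_cast
  rw [he]
  have h2 : (p:ℚ)^k = (p:ℚ)^j * (p:ℚ)^(k-j) := by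
    rw [← pow_add]
    congr 1
    omega
  rw [h2]
  ring

theorem D_p (hp : p.Prime) : D p 1 (p:ℚ) := ⟨1, 1, not_dvd_one hp, by simp⟩

theorem D_p_mul {k : ℕ} (hp : p.Prime) (h : D p k x) : D p (k+1) ((p:ℚ) * x) := by
  simpa [mul_comm, add_comm] using D_mul hp h (D_p hp)

theorem D_cancel_p {k : ℕ} (hp : p.Prime) (h : D p (k+1) ((p:ℚ) * x)) : D p k x := by
  obtain ⟨a, c, hc, he⟩ := h
  refine ⟨a, c, hc, ?_⟩
  have hp0 : (p:ℚ) ≠ 0 := by exact_mod_cast hp.pos.ne'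
  have : (p:ℚ) * (x * c) = (p:ℚ) * ((p:ℚ)^k * a) := by
    rw [← mul_assoc, he, pow_succ]; ring
  exact mul_left_cancel₀ hp0 this

theorem D_cancel_unit {k : ℕ} (hp : p.Prime) (hu : U p y) (h : D p k (x * y)) : D p k x := by
  obtain ⟨c, d, hc, hd, he⟩ := hu
  obtain ⟨a, e, hee, hE⟩ := h
  refine ⟨a * d, e * c, fun h => ((pp hp).dvd_mul.mp h).elim hee hc, ?_⟩
  push_cast
  calc x * (e * c) = (x * y * e) * d := by rw [← he]; ring
  _ = (p:ℚ)^k * (a * d) := by rw [hE]; ring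

theorem D_sum {k : ℕ} (hp : p.Prime) {s : Finset ℕ} {f : ℕ → ℚ}
    (h : ∀ i ∈ s, D p k (f i)) : D p k (∑ i ∈ s, f i) := by
  classical
  induction s using Finset.induction_on with
  | empty => simpa using D_zero hp k
  | insert _ _ hx ih =>
    rw [Finset.sum_insert hx]
    exact D_add hp (h _ (Finset.mem_insert_self _ _))
      (ih fun i hi => h i (Finset.mem_insert_of_mem hi))

theorem U_prod (hp : p.Prime) {s : Finset ℕ} {f : ℕ → ℚ}
    (h : ∀ i ∈ s, U p (f i)) : U p (∏ i ∈ s, f i) := by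
  classical
  induction s using Finset.induction_on with
  | empty => simpa using U_int hp (not_dvd_one hp)
  | insert _ _ hx ih =>
    rw [Finset.prod_insert hx]
    exact U_mul hp (h _ (Finset.mem_insert_self _ _))
      (ih fun i hi => h i (Finset.mem_insert_of_mem hi))



theorem D_prod (hp : p.Prime) {s : Finset ℕ} {f : ℕ → ℚ}
    (h : ∀ i ∈ s, D p 0 (f i)) : D p 0 (∏ i ∈ s, f i) := by
  classical
  induction s using Finset.induction_on with
  | empty => simpa using D_int hp 1
  | insert _ _ hx ih =>
    rw [Finset.prod_insert hx]
    exact D_mul0 hp (h _ (Finset.mem_insert_self _ _))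
      (ih fun i hi => h i (Finset.mem_insert_of_mem hi))

theorem D_ppow_mul {k : ℕ} (h : D p 0 x) : D p k ((p:ℚ)^k * x) := by
  obtain ⟨a, c, hc, he⟩ := h
  refine ⟨a, c, hc, ?_⟩
  rw [mul_assoc, he]
  simp

theorem U_two (hp : p.Prime) (h2 : ¬(p:ℤ) ∣ 2) : U p (2:ℚ) := by
  have := U_int hp h2
  simpa using this

theorem U_sq (hp : p.Prime) (h : U p x) : U p (x^2) := by
  rw [sq]; exact U_mul hp h h

theorem U_of_bounds (hp : p.Prime) {n : ℤ} (h0 : 0 < n) (h1 : n < p) : U p (n:ℚ) :=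
  U_int hp (fun hd => by have := Int.le_of_dvd h0 hd; omega)

theorem D_mul_sub {k : ℕ} (hp : p.Prime) {x x' y y' : ℚ} (h1 : D p k (x - x'))
    (h2 : D p k (y - y')) (hy : D p 0 y) (hx' : D p 0 x') : D p k (x*y - x'*y') := by
  have e : x*y - x'*y' = (x-x')*y + (y-y')*x' := by ring
  rw [e]
  exact D_add hp (D_mul0 hp h1 hy) (D_mul0 hp h2 hx')

/-- main algebraic identity for the induction step -/
theorem step_identity (X G S Q gp cc pq : ℚ) (hg : gp ≠ 0) :
    X*(cc*pq+gp) - G*gp*(1 + pq*(cc * gp⁻¹ + S) + pq^2*(((cc * gp⁻¹ + S)^2 - ((cc*gp⁻¹)^2 + Q))/2)) =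
    (X - G*(1 + pq*S + pq^2*((S^2-Q)/2)))*(cc*pq+gp) + pq^3*(G*cc*((S^2-Q)/2)) := by
  field_simp
  ring

theorem exp_lemma (hp : p.Prime) (h2 : ¬(p:ℤ) ∣ 2) (c : ℚ) (hc : U p c)
    (s : Finset ℕ) (g : ℕ → ℚ) (hg : ∀ i ∈ s, U p (g i)) :
    D p 3 (∏ i ∈ s, (c * p + g i) -
      (∏ i ∈ s, g i) * (1 + (p:ℚ) * (∑ i ∈ s, c * (g i)⁻¹) +
        (p:ℚ)^2 * (((∑ i ∈ s, c * (g i)⁻¹)^2 - ∑ i ∈ s, (c * (g i)⁻¹)^2)/2))) := by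
  classical
  induction s using Finset.induction_on with
  | empty => simpa using D_zero hp 3
  | @insert a s ha ih =>
    have hga : U p (g a) := hg a (Finset.mem_insert_self _ _)
    have hgs : ∀ i ∈ s, U p (g i) := fun i hi => hg i (Finset.mem_insert_of_mem hi)
    rw [Finset.prod_insert ha, Finset.prod_insert ha, Finset.sum_insert ha,
      Finset.sum_insert ha]
    set S := ∑ i ∈ s, c * (g i)⁻¹ with hS
    set Q := ∑ i ∈ s, (c * (g i)⁻¹)^2 with hQ
    set G := ∏ i ∈ s, g i with hG
    set X := ∏ i ∈ s, (c * (p:ℚ) + g i) with hX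
    have hid := step_identity X G S Q (g a) c (p:ℚ) (U_ne_zero hga)
    have e1 : (c * ↑p + g a) * X - g a * G *
        (1 + ↑p * (c * (g a)⁻¹ + S) + ↑p^2 * (((c * (g a)⁻¹ + S)^2 - ((c*(g a)⁻¹)^2 + Q))/2)) =
        (X - G*(1 + ↑p*S + ↑p^2*((S^2-Q)/2)))*(c*↑p+g a) + (p:ℚ)^3*(G*c*((S^2-Q)/2)) := by
      rw [← hid]; ring
    rw [e1]
    have hPIS : D p 0 S := D_sum hp fun i hi => U_toD (U_mul hp hc (U_inv (hgs i hi)))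
    have hPIQ : D p 0 Q := D_sum hp fun i hi => by
      have := U_mul hp hc (U_inv (hgs i hi))
      simpa [sq] using D_mul0 hp (U_toD this) (U_toD this)
    have hPIG : D p 0 G := U_toD (U_prod hp hgs)
    have hPIE : D p 0 ((S^2-Q)/2) := by
      have : D p 0 (S^2 - Q) := D_sub hp (by simpa [sq] using D_mul0 hp hPIS hPIS) hPIQ
      simpa [div_eq_mul_inv] using D_mul0 hp this (U_toD (U_inv (U_two hp h2)))
    refine D_add hp ?_ ?_
    · refine D_mul0 hp (ih hgs) ?_
      exact D_add hp (D_mul0 hp (U_toD hc) (D_nat hp p)) (U_toD hga)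
    · exact D_ppow_mul (D_mul0 hp (D_mul0 hp hPIG (U_toD hc)) hPIE)

theorem perm_prod (hp : p.Prime) (hp5 : 5 ≤ p) (F : ℕ → ℚ) :
    ∏ k ∈ Finset.Ioc 0 (p-1), F (3*k % p) = ∏ k ∈ Finset.Ioc 0 (p-1), F k := by
  have hppos : 0 < p := hp.pos
  have h3 : ¬ p ∣ 3 := fun h => by have := Nat.le_of_dvd (by norm_num) h; omega
  have hmem : ∀ a ∈ Finset.Ioc 0 (p-1), 3*a % p ∈ Finset.Ioc 0 (p-1) := by
    intro a ha
    simp only [Finset.mem_Ioc] at ha ⊢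
    have hlt := Nat.mod_lt (3*a) hppos
    refine ⟨?_, by omega⟩
    rcases Nat.eq_zero_or_pos (3*a % p) with h | h
    · exfalso
      rcases (Nat.Prime.dvd_mul hp).mp (Nat.dvd_of_mod_eq_zero h) with h' | h'
      · exact h3 h'
      · have := Nat.le_of_dvd (by omega) h'; omega
    · exact h
  have hinj : ∀ a₁ ∈ Finset.Ioc 0 (p-1), ∀ a₂ ∈ Finset.Ioc 0 (p-1),
      3*a₁ % p = 3*a₂ % p → a₁ = a₂ := by
    intro a₁ h₁ a₂ h₂ h
    simp only [Finset.mem_Ioc] at h₁ h₂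
    have hc : Nat.gcd p 3 = 1 := (Nat.coprime_primes hp (by norm_num)).mpr (by omega)
    have hme : a₁ ≡ a₂ [MOD p] :=
      Nat.ModEq.cancel_left_of_coprime hc (h : 3*a₁ ≡ 3*a₂ [MOD p])
    have e1 : a₁ % p = a₁ := Nat.mod_eq_of_lt (by omega)
    have e2 : a₂ % p = a₂ := Nat.mod_eq_of_lt (by omega)
    unfold Nat.ModEq at hme
    omega
  refine Finset.prod_nbij (fun a => 3*a % p) hmem hinj ?_ (fun a ha => rfl)
  intro b hb
  obtain ⟨a, ha, he⟩ := Finset.surj_on_of_inj_on_of_card_le (fun a _ => 3*a % p) hmem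
    (fun a₁ a₂ h₁ h₂ hh => hinj a₁ h₁ a₂ h₂ hh) le_rfl b hb
  exact ⟨a, ha, he.symm⟩

theorem sq_sum (n : ℕ) : (∑ k ∈ Finset.Ioc 0 n, (k:ℚ)^2) * 6 = n*(n+1)*(2*n+1) := by
  induction n with
  | zero => simp
  | succ n ih =>
    rw [Finset.sum_Ioc_succ_top (Nat.zero_le _)]
    push_cast
    push_cast at ih
    ring_nf
    ring_nf at ih
    linarith

theorem inv_sq_sum (hp : p.Prime) (hp5 : 5 ≤ p) :
    D p 1 (∑ k ∈ Finset.Ioc 0 (p-1), ((k:ℚ)⁻¹)^2) := by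
  classical
  haveI : Fact p.Prime := ⟨hp⟩
  set iv : ℕ → ℕ := fun k => k^(p-2) % p with hiv
  have hndk : ∀ k : ℕ, 0 < k → k < p → ¬ p ∣ k := fun k hk0 hkp h => by
    have := Nat.le_of_dvd hk0 h; omega
  have key : ∀ k, 0 < k → k < p → (p:ℤ) ∣ (k:ℤ)*(iv k : ℤ) - 1 := by
    intro k hk0 hkp
    have hknz : (k : ZMod p) ≠ 0 := fun h =>
      hndk k hk0 hkp ((ZMod.natCast_eq_zero_iff k p).mp h)
    have hfer : (k : ZMod p)^(p-1) = 1 := ZMod.pow_card_sub_one_eq_one hknz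
    rw [← ZMod.intCast_zmod_eq_zero_iff_dvd]
    push_cast
    rw [ZMod.natCast_mod]
    push_cast
    rw [← pow_succ']
    have e : p - 2 + 1 = p - 1 := by omega
    rw [e, hfer]
    ring
  have hmem : ∀ k ∈ Finset.Ioc 0 (p-1), iv k ∈ Finset.Ioc 0 (p-1) := by
    intro k hk
    simp only [Finset.mem_Ioc] at hk ⊢
    have hlt : iv k < p := Nat.mod_lt _ hp.pos
    refine ⟨?_, by omega⟩
    rcases Nat.eq_zero_or_pos (iv k) with h | h
    · exfalso
      have hdvd : p ∣ k^(p-2) := Nat.dvd_of_mod_eq_zero h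
      exact hndk k (by omega) (by omega) (hp.dvd_of_dvd_pow hdvd)
    · exact h
  have hinj : ∀ a₁ ∈ Finset.Ioc 0 (p-1), ∀ a₂ ∈ Finset.Ioc 0 (p-1),
      iv a₁ = iv a₂ → a₁ = a₂ := by
    intro a₁ h₁ a₂ h₂ h
    simp only [Finset.mem_Ioc] at h₁ h₂
    have k1 := key a₁ (by omega) (by omega)
    have k2 := key a₂ (by omega) (by omega)
    rw [h] at k1
    have hdvd : (p:ℤ) ∣ ((a₁:ℤ) - a₂) * (iv a₂ : ℤ) := by
      have : ((a₁:ℤ) - a₂) * (iv a₂ : ℤ) =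
          ((a₁:ℤ)*(iv a₂ : ℤ) - 1) - ((a₂:ℤ)*(iv a₂ : ℤ) - 1) := by ring
      rw [this]
      exact dvd_sub k1 k2
    have hnd2 : ¬ (p:ℤ) ∣ (iv a₂ : ℤ) := by
      intro hd
      have : (p:ℤ) ∣ 1 := by
        have : (1:ℤ) = (a₂:ℤ)*(iv a₂:ℤ) - ((a₂:ℤ)*(iv a₂ : ℤ) - 1) := by ring
        rw [this]
        exact dvd_sub (Dvd.dvd.mul_left hd _) k2
      exact not_dvd_one hp this
    have hdd : (p:ℤ) ∣ (a₁:ℤ) - a₂ := ((pp hp).dvd_mul.mp hdvd).resolve_right hnd2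
    rcases lt_trichotomy (a₁:ℤ) (a₂:ℤ) with hlt | heq | hgt
    · have := Int.le_of_dvd (by omega) (dvd_neg.mpr hdd)
      omega
    · exact_mod_cast heq
    · have := Int.le_of_dvd (by omega) hdd
      omega
  have e_bij : ∑ k ∈ Finset.Ioc 0 (p-1), ((iv k : ℕ):ℚ)^2
      = ∑ k ∈ Finset.Ioc 0 (p-1), (k:ℚ)^2 := by
    refine Finset.sum_nbij iv hmem hinj ?_ (fun a ha => rfl)
    intro b hb
    obtain ⟨a, ha, he⟩ := Finset.surj_on_of_inj_on_of_card_le (fun a _ => iv a) hmem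
      (fun a₁ a₂ h₁ h₂ hh => hinj a₁ h₁ a₂ h₂ hh) le_rfl b hb
    exact ⟨a, ha, he.symm⟩
  have hpoint : ∀ k ∈ Finset.Ioc 0 (p-1), D p 1 (((k:ℚ)⁻¹)^2 - ((iv k : ℕ):ℚ)^2) := by
    intro k hk
    simp only [Finset.mem_Ioc] at hk
    obtain ⟨w, hw⟩ := key k (by omega) (by omega)
    refine ⟨-w*((k:ℤ)*(iv k) + 1), (k:ℤ)^2, ?_, ?_⟩
    · intro hd
      rcases (pp hp).dvd_mul.mp (by rwa [sq] at hd) with h | h <;>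
        · have := Int.le_of_dvd (by exact_mod_cast Nat.pos_of_ne_zero (by omega)) h
          omega
    · have hk0 : (k:ℚ) ≠ 0 := by
        have : 0 < k := hk.1
        positivity
      have hwq : ((k:ℚ)*(iv k) - 1) = (p:ℚ) * w := by exact_mod_cast congrArg (Int.cast : ℤ → ℚ) hw
      have e : ((k:ℚ)⁻¹)^2 * (k:ℚ)^2 = 1 := by field_simp
      push_cast
      push_cast at hwq
      linear_combination e - ((k:ℚ)*((iv k : ℕ):ℚ) + 1) * hwq
  have h6 : ¬ (p:ℤ) ∣ 6 := by
    intro h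
    have h23 : (p:ℤ) ∣ 2 * 3 := by norm_num; exact_mod_cast h
    rcases (pp hp).dvd_mul.mp h23 with h' | h' <;>
      · have := Int.le_of_dvd (by norm_num) h'
        omega
  have hsum6 : D p 1 (∑ k ∈ Finset.Ioc 0 (p-1), (k:ℚ)^2) := by
    refine ⟨((p:ℤ)-1)*(2*(p:ℤ)-1), 6, h6, ?_⟩
    have hs := sq_sum (p-1)
    have hc : ((p-1:ℕ):ℚ) = (p:ℚ) - 1 := by
      push_cast [Nat.cast_sub (by omega : 1 ≤ p)]
      ring
    rw [hc] at hs
    push_cast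
    linear_combination hs
  have e2 : ∑ k ∈ Finset.Ioc 0 (p-1), ((k:ℚ)⁻¹)^2 =
      (∑ k ∈ Finset.Ioc 0 (p-1), (((k:ℚ)⁻¹)^2 - ((iv k : ℕ):ℚ)^2)) +
        ∑ k ∈ Finset.Ioc 0 (p-1), (k:ℚ)^2 := by
    rw [Finset.sum_sub_distrib, e_bij]
    ring
  rw [e2]
  exact D_add hp (D_sum hp hpoint) hsum6

end LehmerAux



/-- Congruence of rationals: x ≡ y mod p^k in the p-integral rationals ℤ_(p). -/
def RatModCong (p k : ℕ) (x y : ℚ) : Prop :=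
  ∃ a b : ℤ, ¬ (p : ℤ) ∣ b ∧ (x - y) * b = (p : ℚ) ^ k * a

open LehmerAux Finset

/-- Lehmer: for p ≥ 5 prime and b = (3^(p-1)-1)/p the Fermat quotient of 3,
b/2 - p b²/4 ≡ ∑_{r=1}^{⌊p/3⌋} 1/(p-3r) mod p². -/
theorem lehmer_fermat_quotient (p : ℕ) (hp : p.Prime) (hp5 : 5 ≤ p)
    (b : ℤ) (hb : (p : ℤ) * b = 3 ^ (p - 1) - 1) :
    RatModCong p 2 ((b : ℚ) / 2 - (p : ℚ) * (b : ℚ) ^ 2 / 4)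
      (∑ r ∈ Finset.Icc 1 (p / 3), 1 / ((p : ℚ) - 3 * (r : ℚ))) := by
  classical
  have hppos : 0 < p := hp.pos
  have hpQ : (p:ℚ) ≠ 0 := Nat.cast_ne_zero.mpr hppos.ne'
  have h2 : ¬ (p:ℤ) ∣ 2 := fun h => by have := Int.le_of_dvd (by norm_num) h; omega
  have h3p : ¬ 3 ∣ p := by
    intro h
    rcases (Nat.Prime.eq_one_or_self_of_dvd hp 3 h) with h' | h' <;> omega
  have hp3 : p % 3 = 1 ∨ p % 3 = 2 := by
    have : p % 3 ≠ 0 := fun h => h3p (Nat.dvd_of_mod_eq_zero h)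
    omega
  set m := p / 3 with hm
  set m2 := 2 * p / 3 with hm2
  have hb1 : 3 * m < p := by omega
  have hb2 : p < 3 * (m + 1) := by omega
  have hb3 : m < m2 := by omega
  have hb4 : m2 < p - 1 := by omega
  have hb5 : p = m + m2 + 1 := by omega
  have hb6 : 3 * m2 ≤ 2 * p := by omega
  have hb7 : 2 * p < 3 * (m2 + 1) := by omega
  have hb8 : 3 * m2 ≠ 2 * p := by omega
  set I := Finset.Ioc m m2 with hI
  set J := Finset.Ioc 0 m with hJ
  set III := Finset.Ioc m2 (p-1) with hIII
  -- units
  have hUgA : ∀ k ∈ I, U p (3*(k:ℚ) - p) := by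
    intro k hk
    rw [hI, Finset.mem_Ioc] at hk
    have hcast : 3*(k:ℚ) - p = ((3*(k:ℤ) - p : ℤ):ℚ) := by push_cast; ring
    rw [hcast]
    exact U_of_bounds hp (by omega) (by omega)
  have hUgU : ∀ r ∈ J, U p ((p:ℚ) - 3*(r:ℚ)) := by
    intro r hr
    rw [hJ, Finset.mem_Ioc] at hr
    have hcast : (p:ℚ) - 3*(r:ℚ) = (((p:ℤ) - 3*r : ℤ):ℚ) := by push_cast; ring
    rw [hcast]
    exact U_of_bounds hp (by omega) (by omega)
  have hU3 : ∀ k : ℕ, 0 < k → k < p → U p (3*(k:ℚ)) := by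
    intro k h0 h1
    have hcast : (3*(k:ℚ)) = ((3*(k:ℤ) : ℤ):ℚ) := by push_cast; ring
    rw [hcast]
    refine U_int hp (fun hd => ?_)
    rcases (pp hp).dvd_mul.mp hd with h' | h'
    · have := Int.le_of_dvd (by norm_num) h'; omega
    · have := Int.le_of_dvd (by exact_mod_cast h0) h'; omega
  have hU2 : U p (2:ℚ) := U_two hp h2
  have half : U p ((2:ℚ))⁻¹ := U_inv hU2
  have hU4 : U p (4:ℚ) := by
    have := U_mul hp hU2 hU2
    norm_num at this
    exact this
  have hU9 : U p (9:ℚ) := by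
    have h3 : U p (3:ℚ) := by
      have := hU3 1 (by norm_num) (by omega)
      norm_num at this
      exact this
    have := U_mul hp h3 h3
    norm_num at this
    exact this
  -- splitting of products and sums over Ioc 0 (p-1)
  have split : ∀ f : ℕ → ℚ, ∏ k ∈ Finset.Ioc 0 (p-1), f k =
      ((∏ k ∈ J, f k) * (∏ k ∈ I, f k)) * (∏ k ∈ III, f k) := by
    intro f
    rw [hJ, hI, hIII]
    rw [Finset.prod_Ioc_consecutive f (Nat.zero_le m) (le_of_lt hb3),
      Finset.prod_Ioc_consecutive f (by omega) (by omega)]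
  have splitS : ∀ f : ℕ → ℚ, ∑ k ∈ Finset.Ioc 0 (p-1), f k =
      ((∑ k ∈ J, f k) + (∑ k ∈ I, f k)) + (∑ k ∈ III, f k) := by
    intro f
    rw [hJ, hI, hIII]
    rw [Finset.sum_Ioc_consecutive f (Nat.zero_le m) (le_of_lt hb3),
      Finset.sum_Ioc_consecutive f (by omega) (by omega)]
  -- bijection III ↔ J
  have hbijP : ∀ f : ℕ → ℚ, (∏ k ∈ III, f k) = ∏ r ∈ J, f (p - r) := by
    intro f
    rw [hIII, hJ]
    refine Finset.prod_nbij' (i := fun k => p - k) (j := fun r => p - r) ?_ ?_ ?_ ?_ ?_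
    · intro a ha; simp only [Finset.mem_Ioc] at ha ⊢; omega
    · intro a ha; simp only [Finset.mem_Ioc] at ha ⊢; omega
    · intro a ha; simp only [Finset.mem_Ioc] at ha; omega
    · intro a ha; simp only [Finset.mem_Ioc] at ha; omega
    · intro a ha
      simp only [Finset.mem_Ioc] at ha
      have e : p - (p - a) = a := by omega
      rw [e]
  have hbijS : ∀ f : ℕ → ℚ, (∑ k ∈ III, f k) = ∑ r ∈ J, f (p - r) := by
    intro f
    rw [hIII, hJ]
    refine Finset.sum_nbij' (i := fun k => p - k) (j := fun r => p - r) ?_ ?_ ?_ ?_ ?_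
    · intro a ha; simp only [Finset.mem_Ioc] at ha ⊢; omega
    · intro a ha; simp only [Finset.mem_Ioc] at ha ⊢; omega
    · intro a ha; simp only [Finset.mem_Ioc] at ha; omega
    · intro a ha; simp only [Finset.mem_Ioc] at ha; omega
    · intro a ha
      simp only [Finset.mem_Ioc] at ha
      have e : p - (p - a) = a := by omega
      rw [e]
  -- the product identity
  have step1 : ∏ k ∈ Finset.Ioc 0 (p-1), ((3:ℚ)*(k:ℚ)) =
      3^(p-1) * ∏ k ∈ Finset.Ioc 0 (p-1), (k:ℚ) := by
    rw [Finset.prod_mul_distrib, Finset.prod_const, Nat.card_Ioc]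
    norm_num
  have step2 : ∏ k ∈ Finset.Ioc 0 (p-1), ((3:ℚ)*(k:ℚ)) =
      ((∏ k ∈ J, (3:ℚ)*(k:ℚ)) * (∏ i ∈ I, ((1:ℚ)*(p:ℚ) + (3*(i:ℚ) - p)))) *
        (∏ r ∈ J, ((2:ℚ)*(p:ℚ) + ((p:ℚ) - 3*(r:ℚ)))) := by
    rw [split (fun k => (3:ℚ)*(k:ℚ))]
    congr 1
    · congr 1
      exact Finset.prod_congr rfl (fun i _ => by ring)
    · rw [hbijP (fun k => (3:ℚ)*(k:ℚ))]
      refine Finset.prod_congr rfl (fun r hr => ?_)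
      rw [hJ, Finset.mem_Ioc] at hr
      have e : ((p - r : ℕ):ℚ) = (p:ℚ) - r := by
        rw [Nat.cast_sub (by omega)]
      rw [e]
      ring
  have step4 : ∏ k ∈ Finset.Ioc 0 (p-1), (k:ℚ) =
      (∏ k ∈ J, (3:ℚ)*(k:ℚ)) * ((∏ i ∈ I, (3*(i:ℚ) - p)) * (∏ r ∈ J, ((p:ℚ) - 3*(r:ℚ)))) := by
    rw [← perm_prod hp hp5 (fun k => (k:ℚ)), split (fun k => ((3*k % p : ℕ):ℚ))]
    have f1 : ∏ k ∈ J, ((3*k % p : ℕ):ℚ) = ∏ k ∈ J, (3:ℚ)*(k:ℚ) := by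
      refine Finset.prod_congr rfl (fun k hk => ?_)
      rw [hJ, Finset.mem_Ioc] at hk
      have e : 3*k % p = 3*k := Nat.mod_eq_of_lt (by omega)
      rw [e]; push_cast; ring
    have f2 : ∏ k ∈ I, ((3*k % p : ℕ):ℚ) = ∏ i ∈ I, (3*(i:ℚ) - p) := by
      refine Finset.prod_congr rfl (fun k hk => ?_)
      rw [hI, Finset.mem_Ioc] at hk
      have e : 3*k % p = 3*k - p := by
        rw [Nat.mod_eq_sub_mod (by omega)]
        exact Nat.mod_eq_of_lt (by omega)
      rw [e, Nat.cast_sub (by omega : p ≤ 3*k)]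
      push_cast; ring
    have f3 : ∏ k ∈ III, ((3*k % p : ℕ):ℚ) = ∏ r ∈ J, ((p:ℚ) - 3*(r:ℚ)) := by
      have e0 : ∀ k ∈ III, ((3*k % p : ℕ):ℚ) = 3*(k:ℚ) - 2*p := by
        intro k hk
        rw [hIII, Finset.mem_Ioc] at hk
        have e : 3*k % p = 3*k - 2*p := by
          rw [Nat.mod_eq_sub_mod (by omega), Nat.mod_eq_sub_mod (by omega)]
          have e2 : 3*k - p - p = 3*k - 2*p := by omega
          rw [e2]
          exact Nat.mod_eq_of_lt (by omega)
        rw [e, Nat.cast_sub (by omega : 2*p ≤ 3*k)]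
        push_cast; ring
      rw [Finset.prod_congr rfl e0, hbijP (fun k => 3*(k:ℚ) - 2*(p:ℚ))]
      refine Finset.prod_congr rfl (fun r hr => ?_)
      rw [hJ, Finset.mem_Ioc] at hr
      have e : ((p - r : ℕ):ℚ) = (p:ℚ) - r := by rw [Nat.cast_sub (by omega)]
      rw [e]
      ring
    rw [f1, f2, f3]
    ring
  have hPJ : (∏ k ∈ J, (3:ℚ)*(k:ℚ)) ≠ 0 := by
    rw [Finset.prod_ne_zero_iff]
    intro k hk
    rw [hJ, Finset.mem_Ioc] at hk
    have : (0:ℚ) < (k:ℚ) := by exact_mod_cast hk.1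
    positivity
  have key : (3:ℚ)^(p-1) * ((∏ i ∈ I, (3*(i:ℚ) - p)) * (∏ r ∈ J, ((p:ℚ) - 3*(r:ℚ)))) =
      (∏ i ∈ I, ((1:ℚ)*(p:ℚ) + (3*(i:ℚ) - p))) * (∏ r ∈ J, ((2:ℚ)*(p:ℚ) + ((p:ℚ) - 3*(r:ℚ)))) := by
    have e : (∏ k ∈ J, (3:ℚ)*(k:ℚ)) * ((3:ℚ)^(p-1) *
        ((∏ i ∈ I, (3*(i:ℚ) - p)) * (∏ r ∈ J, ((p:ℚ) - 3*(r:ℚ))))) =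
        (∏ k ∈ J, (3:ℚ)*(k:ℚ)) * ((∏ i ∈ I, ((1:ℚ)*(p:ℚ) + (3*(i:ℚ) - p))) *
          (∏ r ∈ J, ((2:ℚ)*(p:ℚ) + ((p:ℚ) - 3*(r:ℚ))))) := by
      calc (∏ k ∈ J, (3:ℚ)*(k:ℚ)) * ((3:ℚ)^(p-1) *
          ((∏ i ∈ I, (3*(i:ℚ) - p)) * (∏ r ∈ J, ((p:ℚ) - 3*(r:ℚ)))))
          = (3:ℚ)^(p-1) * ((∏ k ∈ J, (3:ℚ)*(k:ℚ)) *
            ((∏ i ∈ I, (3*(i:ℚ) - p)) * (∏ r ∈ J, ((p:ℚ) - 3*(r:ℚ))))) := by ring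
        _ = (3:ℚ)^(p-1) * (∏ k ∈ Finset.Ioc 0 (p-1), (k:ℚ)) := by rw [← step4]
        _ = ∏ k ∈ Finset.Ioc 0 (p-1), ((3:ℚ)*(k:ℚ)) := step1.symm
        _ = _ := by rw [step2]; ring
    exact mul_left_cancel₀ hPJ e
  -- expansion of the two products mod p^3
  have EA := exp_lemma hp h2 1 (by simpa using U_int hp (not_dvd_one hp)) I
    (fun k => 3*(k:ℚ) - (p:ℚ)) hUgA
  have EB := exp_lemma hp h2 2 hU2 J (fun r => (p:ℚ) - 3*(r:ℚ)) hUgU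
  simp only [one_mul] at EA
  set α := ∑ i ∈ I, (3*(i:ℚ) - (p:ℚ))⁻¹ with ha1
  set α₂ := ∑ i ∈ I, ((3*(i:ℚ) - (p:ℚ))⁻¹)^2 with ha2
  set β := ∑ r ∈ J, ((p:ℚ) - 3*(r:ℚ))⁻¹ with hbe1
  set β₂ := ∑ r ∈ J, (((p:ℚ) - 3*(r:ℚ))⁻¹)^2 with hbe2
  set A0 := ∏ i ∈ I, (3*(i:ℚ) - (p:ℚ)) with hA0
  set U0 := ∏ r ∈ J, ((p:ℚ) - 3*(r:ℚ)) with hU0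
  have sB1 : ∑ r ∈ J, (2:ℚ) * ((p:ℚ) - 3*(r:ℚ))⁻¹ = 2*β := by
    rw [hbe1, Finset.mul_sum]
  have sB2 : ∑ r ∈ J, ((2:ℚ) * ((p:ℚ) - 3*(r:ℚ))⁻¹)^2 = 4*β₂ := by
    rw [hbe2, Finset.mul_sum]
    exact Finset.sum_congr rfl (fun r _ => by ring)
  rw [sB1, sB2] at EB
  have hUA0 : U p A0 := U_prod hp hUgA
  have hUU0 : U p U0 := U_prod hp hUgU
  have hPIa1 : D p 0 α := D_sum hp (fun i hi => U_toD (U_inv (hUgA i hi)))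
  have hPIa2 : D p 0 α₂ := D_sum hp (fun i hi => U_toD (U_sq hp (U_inv (hUgA i hi))))
  have hPIb1 : D p 0 β := D_sum hp (fun r hr => U_toD (U_inv (hUgU r hr)))
  have hPIb2 : D p 0 β₂ := D_sum hp (fun r hr => U_toD (U_sq hp (U_inv (hUgU r hr))))
  have hPIb : D p 0 (b:ℚ) := D_int hp b
  have hPIp : D p 0 (p:ℚ) := D_nat hp p
  set Ea := (α^2 - α₂)/2 with hEa
  set Eb := ((2*β)^2 - 4*β₂)/2 with hEb
  have hPIEa : D p 0 Ea := by
    rw [hEa, div_eq_mul_inv]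
    exact D_mul0 hp (D_sub hp (by simpa [sq] using D_mul0 hp hPIa1 hPIa1) hPIa2)
      (U_toD half)
  have hPIEb : D p 0 Eb := by
    rw [hEb, div_eq_mul_inv]
    refine D_mul0 hp (D_sub hp ?_ ?_) (U_toD half)
    · have : ((2*β)^2 : ℚ) = (2*β)*(2*β) := by ring
      rw [this]
      exact D_mul0 hp (D_mul0 hp (D_int hp 2) hPIb1) (D_mul0 hp (D_int hp 2) hPIb1)
    · exact D_mul0 hp (D_int hp 4) hPIb2
  -- combine the two expansions
  have HAB : D p 3 ((3:ℚ)^(p-1) - (1 + (p:ℚ)*α + (p:ℚ)^2*Ea) * (1 + (p:ℚ)*(2*β) + (p:ℚ)^2*Eb)) := by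
    have hPIPU : D p 0 (∏ r ∈ J, ((2:ℚ)*(p:ℚ) + ((p:ℚ) - 3*(r:ℚ)))) :=
      D_prod hp (fun r hr => D_add hp (D_mul0 hp (D_int hp 2) hPIp) (U_toD (hUgU r hr)))
    have hPIWA : D p 0 (A0 * (1 + (p:ℚ)*α + (p:ℚ)^2*Ea)) := by
      refine D_mul0 hp (U_toD hUA0) ?_
      refine D_add hp (D_add hp (D_int hp 1) (D_mul0 hp hPIp hPIa1)) ?_
      have : ((p:ℚ)^2*Ea) = (p:ℚ)*((p:ℚ)*Ea) := by ring
      rw [this]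
      exact D_mul0 hp hPIp (D_mul0 hp hPIp hPIEa)
    have H0 : D p 3 ((∏ i ∈ I, ((1:ℚ)*(p:ℚ) + (3*(i:ℚ) - (p:ℚ)))) *
        (∏ r ∈ J, ((2:ℚ)*(p:ℚ) + ((p:ℚ) - 3*(r:ℚ)))) -
        (A0 * (1 + (p:ℚ)*α + (p:ℚ)^2*Ea)) * (U0 * (1 + (p:ℚ)*(2*β) + (p:ℚ)^2*Eb))) := by
      refine D_mul_sub hp ?_ EB hPIPU hPIWA
      have eA : ∏ i ∈ I, ((1:ℚ)*(p:ℚ) + (3*(i:ℚ) - (p:ℚ))) =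
          ∏ i ∈ I, ((p:ℚ) + (3*(i:ℚ) - (p:ℚ))) := by
        exact Finset.prod_congr rfl (fun i _ => by ring)
      rw [eA]
      exact EA
    rw [← key] at H0
    have e : (3:ℚ)^(p-1) * (A0 * U0) -
        (A0 * (1 + (p:ℚ)*α + (p:ℚ)^2*Ea)) * (U0 * (1 + (p:ℚ)*(2*β) + (p:ℚ)^2*Eb)) =
        ((3:ℚ)^(p-1) - (1 + (p:ℚ)*α + (p:ℚ)^2*Ea) * (1 + (p:ℚ)*(2*β) + (p:ℚ)^2*Eb)) * (A0 * U0) := by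
      ring
    rw [e] at H0
    exact D_cancel_unit hp (U_mul hp hUA0 hUU0) H0
  have hbQ : (3:ℚ)^(p-1) = 1 + (p:ℚ)*(b:ℚ) := by
    have h' : ((p:ℤ)*b : ℚ) = ((3^(p-1) - 1 : ℤ):ℚ) := by exact_mod_cast congrArg (fun z : ℤ => (z:ℚ)) hb
    push_cast at h'
    linarith
  set G := Ea + Eb + 2*α*β with hG
  set R := α*Eb + 2*β*Ea + (p:ℚ)*Ea*Eb with hR
  have hPIG : D p 0 G := by
    rw [hG]
    refine D_add hp (D_add hp hPIEa hPIEb) ?_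
    have e : (2*α*β : ℚ) = 2*(α*β) := by ring
    rw [e]
    exact D_mul0 hp (D_int hp 2) (D_mul0 hp hPIa1 hPIb1)
  have hPIR : D p 0 R := by
    rw [hR]
    refine D_add hp (D_add hp (D_mul0 hp hPIa1 hPIEb) ?_) ?_
    · have e : (2*β*Ea : ℚ) = 2*(β*Ea) := by ring
      rw [e]
      exact D_mul0 hp (D_int hp 2) (D_mul0 hp hPIb1 hPIEa)
    · exact D_mul0 hp (D_mul0 hp hPIp hPIEa) hPIEb
  have T1' : D p 2 ((b:ℚ) - α - 2*β - (p:ℚ)*G - (p:ℚ)^2*R) := by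
    apply D_cancel_p hp
    have e : (p:ℚ) * ((b:ℚ) - α - 2*β - (p:ℚ)*G - (p:ℚ)^2*R) =
        (3:ℚ)^(p-1) - (1 + (p:ℚ)*α + (p:ℚ)^2*Ea) * (1 + (p:ℚ)*(2*β) + (p:ℚ)^2*Eb) := by
      rw [hbQ, hG, hR]
      ring
    rw [e]
    exact HAB
  have T1 : D p 2 ((b:ℚ) - α - 2*β - (p:ℚ)*G) := by
    have e : (b:ℚ) - α - 2*β - (p:ℚ)*G =
        ((b:ℚ) - α - 2*β - (p:ℚ)*G - (p:ℚ)^2*R) + (p:ℚ)^2*R := by ring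
    rw [e]
    exact D_add hp T1' (D_ppow_mul hPIR)
  -- F1 : pairing argument, α + (p/2)α₂ ≡ 0 mod p^3
  have T2 : D p 2 (α + (p:ℚ)/2 * α₂) := by
    have e1 : ∑ k ∈ I, ((3*(k:ℚ) - (p:ℚ))⁻¹ + (p:ℚ)/2 * ((3*(k:ℚ) - (p:ℚ))⁻¹)^2)
        = α + (p:ℚ)/2 * α₂ := by
      rw [ha1, ha2, Finset.sum_add_distrib, Finset.mul_sum]
    have einv : ∑ k ∈ I, ((3*(k:ℚ) - (p:ℚ))⁻¹ + (p:ℚ)/2 * ((3*(k:ℚ) - (p:ℚ))⁻¹)^2)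
        = ∑ k ∈ I, ((3*((p-k:ℕ):ℚ) - (p:ℚ))⁻¹ + (p:ℚ)/2 * ((3*((p-k:ℕ):ℚ) - (p:ℚ))⁻¹)^2) := by
      rw [hI]
      refine Finset.sum_nbij' (i := fun k => p - k) (j := fun k => p - k) ?_ ?_ ?_ ?_ ?_
      · intro a ha; simp only [Finset.mem_Ioc] at ha ⊢; omega
      · intro a ha; simp only [Finset.mem_Ioc] at ha ⊢; omega
      · intro a ha; simp only [Finset.mem_Ioc] at ha; omega
      · intro a ha; simp only [Finset.mem_Ioc] at ha; omega
      · intro a ha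
        simp only [Finset.mem_Ioc] at ha
        have e : p - (p - a) = a := by omega
        rw [e]
    have hpair : ∀ k ∈ I, D p 3
        (((3*(k:ℚ) - (p:ℚ))⁻¹ + (p:ℚ)/2 * ((3*(k:ℚ) - (p:ℚ))⁻¹)^2) +
         ((3*((p-k:ℕ):ℚ) - (p:ℚ))⁻¹ + (p:ℚ)/2 * ((3*((p-k:ℕ):ℚ) - (p:ℚ))⁻¹)^2)) := by
      intro k hk
      rw [hI, Finset.mem_Ioc] at hk
      have ec : ((p-k:ℕ):ℚ) = (p:ℚ) - k := by rw [Nat.cast_sub (by omega)]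
      have hUs : U p (3*(k:ℚ) - p) := by
        have : 3*(k:ℚ) - p = ((3*(k:ℤ) - p : ℤ):ℚ) := by push_cast; ring
        rw [this]; exact U_of_bounds hp (by omega) (by omega)
      have hUt : U p (2*(p:ℚ) - 3*(k:ℚ)) := by
        have : 2*(p:ℚ) - 3*k = ((2*(p:ℤ) - 3*k : ℤ):ℚ) := by push_cast; ring
        rw [this]; exact U_of_bounds hp (by omega) (by omega)
      have hs0 : (3*(k:ℚ) - (p:ℚ)) ≠ 0 := U_ne_zero hUs
      have ht0 : (2*(p:ℚ) - 3*(k:ℚ)) ≠ 0 := U_ne_zero hUt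
      have e2 : 3*((p-k:ℕ):ℚ) - (p:ℚ) = 2*(p:ℚ) - 3*(k:ℚ) := by rw [ec]; ring
      rw [e2]
      have iden : ((3*(k:ℚ) - (p:ℚ))⁻¹ + (p:ℚ)/2 * ((3*(k:ℚ) - (p:ℚ))⁻¹)^2) +
          ((2*(p:ℚ) - 3*(k:ℚ))⁻¹ + (p:ℚ)/2 * ((2*(p:ℚ) - 3*(k:ℚ))⁻¹)^2) =
          (p:ℚ)^3 * ((2 * (3*(k:ℚ) - (p:ℚ))^2 * (2*(p:ℚ) - 3*(k:ℚ))^2)⁻¹) := by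
        have h20 : (2:ℚ) ≠ 0 := by norm_num
        have gen : ∀ s t : ℚ, s ≠ 0 → t ≠ 0 → s + t = (p:ℚ) →
            (s⁻¹ + (p:ℚ)/2 * (s⁻¹)^2) + (t⁻¹ + (p:ℚ)/2 * (t⁻¹)^2) = (p:ℚ)^3 * ((2 * s^2 * t^2)⁻¹) := by
          intro s t hs ht hst
          rw [← hst]
          field_simp
          ring
        exact gen _ _ hs0 ht0 (by ring)
      rw [iden]
      exact D_ppow_mul (U_toD (U_inv (U_mul hp (U_mul hp hU2 (U_sq hp hUs)) (U_sq hp hUt))))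
    have hsum : D p 3 ((α + (p:ℚ)/2 * α₂) * 2) := by
      have e3 : (α + (p:ℚ)/2 * α₂) * 2 =
          ∑ k ∈ I, (((3*(k:ℚ) - (p:ℚ))⁻¹ + (p:ℚ)/2 * ((3*(k:ℚ) - (p:ℚ))⁻¹)^2) +
            ((3*((p-k:ℕ):ℚ) - (p:ℚ))⁻¹ + (p:ℚ)/2 * ((3*((p-k:ℕ):ℚ) - (p:ℚ))⁻¹)^2)) := by
        rw [Finset.sum_add_distrib, ← einv, e1]
        ring
      rw [e3]
      exact D_sum hp hpair
    exact D_mono (by norm_num) (D_cancel_unit hp hU2 hsum)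
  -- F2 : α₂ + 2β₂ ≡ 0 mod p
  have T3 : D p 1 (α₂ + 2*β₂) := by
    have c1 : ∀ k ∈ I, D p 1 (((3*(k:ℚ) - (p:ℚ))⁻¹)^2 - ((3*(k:ℚ))⁻¹)^2) := by
      intro k hk
      rw [hI, Finset.mem_Ioc] at hk
      have hUs : U p (3*(k:ℚ) - p) := by
        have : 3*(k:ℚ) - p = ((3*(k:ℤ) - p : ℤ):ℚ) := by push_cast; ring
        rw [this]; exact U_of_bounds hp (by omega) (by omega)
      have hU3k : U p (3*(k:ℚ)) := hU3 k (by omega) (by omega)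
      have iden : ((3*(k:ℚ) - (p:ℚ))⁻¹)^2 - ((3*(k:ℚ))⁻¹)^2 =
          (p:ℚ) * ((6*(k:ℚ) - p) * (((3*(k:ℚ) - (p:ℚ))^2 * (3*(k:ℚ))^2)⁻¹)) := by
        have hs0 := U_ne_zero hUs
        have hk0 := U_ne_zero hU3k
        have hk' : (k:ℚ) ≠ 0 := right_ne_zero_of_mul hk0
        field_simp
        ring
      rw [iden]
      refine D_p_mul (k := 0) hp (D_mul0 hp ?_ (U_toD (U_inv (U_mul hp (U_sq hp hUs) (U_sq hp hU3k)))))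
      have : (6*(k:ℚ) - p) = ((6*(k:ℤ) - p : ℤ):ℚ) := by push_cast; ring
      rw [this]; exact D_int hp _
    have c2 : ∀ r ∈ J, D p 1 ((((p:ℚ) - 3*(r:ℚ))⁻¹)^2 - ((3*(r:ℚ))⁻¹)^2) := by
      intro r hr
      have hrr := hr
      rw [hJ, Finset.mem_Ioc] at hrr
      have hUs : U p ((p:ℚ) - 3*(r:ℚ)) := hUgU r hr
      have hU3r : U p (3*(r:ℚ)) := hU3 r (by omega) (by omega)
      have iden : (((p:ℚ) - 3*(r:ℚ))⁻¹)^2 - ((3*(r:ℚ))⁻¹)^2 =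
          (p:ℚ) * ((6*(r:ℚ) - p) * ((((p:ℚ) - 3*(r:ℚ))^2 * (3*(r:ℚ))^2)⁻¹)) := by
        have hs0 := U_ne_zero hUs
        have hr0 := U_ne_zero hU3r
        have hr' : (r:ℚ) ≠ 0 := right_ne_zero_of_mul hr0
        field_simp
        ring
      rw [iden]
      refine D_p_mul (k := 0) hp (D_mul0 hp ?_ (U_toD (U_inv (U_mul hp (U_sq hp hUs) (U_sq hp hU3r)))))
      have : (6*(r:ℚ) - p) = ((6*(r:ℤ) - p : ℤ):ℚ) := by push_cast; ring
      rw [this]; exact D_int hp _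
    have c3 : ∀ k ∈ III, D p 1 (((3*(k:ℚ) - 2*(p:ℚ))⁻¹)^2 - ((3*(k:ℚ))⁻¹)^2) := by
      intro k hk
      rw [hIII, Finset.mem_Ioc] at hk
      have hUs : U p (3*(k:ℚ) - 2*p) := by
        have : 3*(k:ℚ) - 2*p = ((3*(k:ℤ) - 2*p : ℤ):ℚ) := by push_cast; ring
        rw [this]; exact U_of_bounds hp (by omega) (by omega)
      have hU3k : U p (3*(k:ℚ)) := hU3 k (by omega) (by omega)
      have iden : ((3*(k:ℚ) - 2*(p:ℚ))⁻¹)^2 - ((3*(k:ℚ))⁻¹)^2 =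
          (p:ℚ) * ((12*(k:ℚ) - 4*p) * (((3*(k:ℚ) - 2*(p:ℚ))^2 * (3*(k:ℚ))^2)⁻¹)) := by
        have hs0 := U_ne_zero hUs
        have hk0 := U_ne_zero hU3k
        have hk' : (k:ℚ) ≠ 0 := right_ne_zero_of_mul hk0
        field_simp
        ring
      rw [iden]
      refine D_p_mul (k := 0) hp (D_mul0 hp ?_ (U_toD (U_inv (U_mul hp (U_sq hp hUs) (U_sq hp hU3k)))))
      have : (12*(k:ℚ) - 4*p) = ((12*(k:ℤ) - 4*p : ℤ):ℚ) := by push_cast; ring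
      rw [this]; exact D_int hp _
    have ebij2 : β₂ = ∑ k ∈ III, ((3*(k:ℚ) - 2*(p:ℚ))⁻¹)^2 := by
      rw [hbijS (fun k => ((3*(k:ℚ) - 2*(p:ℚ))⁻¹)^2), hbe2]
      refine Finset.sum_congr rfl (fun r hr => ?_)
      rw [hJ, Finset.mem_Ioc] at hr
      have ec : ((p-r:ℕ):ℚ) = (p:ℚ) - r := by rw [Nat.cast_sub (by omega)]
      rw [ec]
      ring_nf
    have eAll : α₂ + 2*β₂ =
        ((∑ k ∈ I, (((3*(k:ℚ) - (p:ℚ))⁻¹)^2 - ((3*(k:ℚ))⁻¹)^2))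
        + (∑ r ∈ J, ((((p:ℚ) - 3*(r:ℚ))⁻¹)^2 - ((3*(r:ℚ))⁻¹)^2))
        + (∑ k ∈ III, (((3*(k:ℚ) - 2*(p:ℚ))⁻¹)^2 - ((3*(k:ℚ))⁻¹)^2)))
        + ∑ k ∈ Finset.Ioc 0 (p-1), ((3*(k:ℚ))⁻¹)^2 := by
      rw [splitS (fun k => ((3*(k:ℚ))⁻¹)^2)]
      simp only [Finset.sum_sub_distrib]
      rw [← ha2, ← hbe2]
      have e2b : (2:ℚ)*β₂ = β₂ + β₂ := by ring
      rw [e2b]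
      nth_rewrite 2 [ebij2]
      ring
    rw [eAll]
    refine D_add hp (D_add hp (D_add hp (D_sum hp c1) (D_sum hp c2)) (D_sum hp c3)) ?_
    have e9 : ∑ k ∈ Finset.Ioc 0 (p-1), ((3*(k:ℚ))⁻¹)^2 =
        (∑ k ∈ Finset.Ioc 0 (p-1), ((k:ℚ)⁻¹)^2) * ((9:ℚ))⁻¹ := by
      rw [Finset.sum_mul]
      refine Finset.sum_congr rfl (fun k _ => ?_)
      rw [mul_inv]
      ring
    rw [e9]
    exact D_mul0 hp (inv_sq_sum hp hp5) (U_toD (U_inv hU9))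
  -- easy consequences
  have T4 : D p 1 α := by
    have e : α = (α + (p:ℚ)/2*α₂) - (p:ℚ) * (α₂ * (2:ℚ)⁻¹) := by ring
    rw [e]
    exact D_sub hp (D_mono (by norm_num) T2) (D_p_mul (k := 0) hp (D_mul0 hp hPIa2 (U_toD half)))
  have T5 : D p 1 ((b:ℚ) - 2*β) := by
    have e : (b:ℚ) - 2*β = (((b:ℚ) - α - 2*β - (p:ℚ)*G) + α) + (p:ℚ)*G := by ring
    rw [e]
    exact D_add hp (D_add hp (D_mono (by norm_num) T1) T4) (D_p_mul (k := 0) hp hPIG)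
  -- final assembly
  have hPIbb : D p 0 ((b:ℚ) + 2*β) :=
    D_add hp hPIb (D_mul0 hp (D_int hp 2) hPIb1)
  have hK1 : D p 1 (-((4:ℚ)⁻¹*(((b:ℚ)-2*β)*((b:ℚ)+2*β))) + α*(α*(4:ℚ)⁻¹ + β)
      - (2:ℚ)⁻¹*(α₂+2*β₂)) := by
    refine D_sub hp (D_add hp (D_neg ?_) ?_) ?_
    · have e : (4:ℚ)⁻¹*(((b:ℚ)-2*β)*((b:ℚ)+2*β)) = ((b:ℚ)-2*β)*(((b:ℚ)+2*β)*(4:ℚ)⁻¹) := by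
        ring
      rw [e]
      exact D_mul0 hp T5 (D_mul0 hp hPIbb (U_toD (U_inv hU4)))
    · exact D_mul0 hp T4 (D_add hp (D_mul0 hp hPIa1 (U_toD (U_inv hU4))) hPIb1)
    · have e : (2:ℚ)⁻¹*(α₂+2*β₂) = (α₂+2*β₂)*(2:ℚ)⁻¹ := by ring
      rw [e]
      exact D_mul0 hp T3 (U_toD half)
  have hIcc : Finset.Icc 1 (p/3) = J := by
    rw [hJ, hm]
    exact Finset.Icc_add_one_left_eq_Ioc 0 (p/3)
  have hgoalsum : (∑ r ∈ Finset.Icc 1 (p/3), 1 / ((p:ℚ) - 3*(r:ℚ))) = β := by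
    rw [hIcc, hbe1]
    exact Finset.sum_congr rfl (fun r _ => one_div _)
  have main : D p 2 ((b:ℚ)/2 - (p:ℚ)*(b:ℚ)^2/4 - β) := by
    have efin : (b:ℚ)/2 - (p:ℚ)*(b:ℚ)^2/4 - β =
        (((b:ℚ) - α - 2*β - (p:ℚ)*G)*(2:ℚ)⁻¹ + (α + (p:ℚ)/2*α₂)*(2:ℚ)⁻¹) +
          (p:ℚ)*(-((4:ℚ)⁻¹*(((b:ℚ)-2*β)*((b:ℚ)+2*β))) + α*(α*(4:ℚ)⁻¹ + β)
            - (2:ℚ)⁻¹*(α₂+2*β₂)) := by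
      rw [hG, hEa, hEb]
      ring
    rw [efin]
    exact D_add hp (D_add hp (D_mul0 hp T1 (U_toD half)) (D_mul0 hp T2 (U_toD half)))
      (D_p_mul (k := 1) hp hK1)
  rw [hgoalsum] at *
  obtain ⟨a, c, hc, he⟩ := main
  exact ⟨a, c, hc, he⟩
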